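/- Let A and B be positive invertible bounded operators on a complex Hilbert space such that A − B ≥ m·I for some scalar m > 0. Then B⁻¹ − A⁻¹ ≥ m‖B‖⁻¹(‖B‖ + m)⁻¹ · I. -/

import Mathlib

set_option synthInstance.maxHeartbeats 1000000
set_option maxHeartbeats 1000000

theorem inverse_difference_lower_bound_normB
    {H : Type*} [NormedAddCommGroup H] [InnerProductSpace ℂ H] [CompleteSpace H] [Nontrivial H]
    (A B : H →L[ℂ] H) (hA : IsSelfAdjoint A) (hB : IsSelfAdjoint B)
    (hApos : 0 ≤ A) (hBpos : 0 ≤ B) (hAinv : IsUnit A) (hBinv : IsUnit B)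
    (m : ℝ) (hm : 0 < m) (hAB : m • (1 : H →L[ℂ] H) ≤ A - B) :
    (m * ‖B‖⁻¹ * (‖B‖ + m)⁻¹) • (1 : H →L[ℂ] H) ≤ Ring.inverse B - Ring.inverse A := by
  set c := ‖B‖ with hc
  have hBne : B ≠ 0 := hBinv.ne_zero
  have hcpos : (0 : ℝ) < c := norm_pos_iff.mpr hBne
  set T : H →L[ℂ] H := B + m • 1 with hT
  -- m•1 is a unit
  have hsm1 : IsUnit (m • (1 : H →L[ℂ] H)) := by
    have h1 : (m • (1 : H →L[ℂ] H)) * (m⁻¹ • 1) = 1 := by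
      rw [smul_mul_smul_comm, one_mul, mul_inv_cancel₀ hm.ne', one_smul]
    have h2 : (m⁻¹ • (1 : H →L[ℂ] H)) * (m • 1) = 1 := by
      rw [smul_mul_smul_comm, one_mul, inv_mul_cancel₀ hm.ne', one_smul]
    exact ⟨⟨m • 1, m⁻¹ • 1, h1, h2⟩, rfl⟩
  have hsm1_nonneg : (0 : H →L[ℂ] H) ≤ m • 1 := smul_nonneg hm.le zero_le_one
  have hsm1_le_T : m • (1 : H →L[ℂ] H) ≤ T := by
    rw [hT]; exact le_add_of_nonneg_left hBpos
  have hTunit : IsUnit T := CStarAlgebra.isUnit_of_le _ hsm1_le_T (hsm1.isStrictlyPositive hsm1_nonneg)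
  have hTnonneg : (0 : H →L[ℂ] H) ≤ T := hsm1_nonneg.trans hsm1_le_T
  have hTA : T ≤ A := by
    rw [hT]
    have := add_le_add_right hAB B
    simpa [sub_add_cancel, add_comm] using this
  -- units
  set a := hAinv.unit with ha
  set b := hBinv.unit with hb
  set t := hTunit.unit with ht
  have hca : (a : H →L[ℂ] H) = A := hAinv.unit_spec
  have hcb : (b : H →L[ℂ] H) = B := hBinv.unit_spec
  have hct : (t : H →L[ℂ] H) = T := hTunit.unit_spec
  -- step A : A⁻¹ ≤ T⁻¹
  have stepA : (↑a⁻¹ : H →L[ℂ] H) ≤ ↑t⁻¹ :=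
    CStarAlgebra.inv_le_inv (by rw [hct]; exact hTnonneg) (by rw [hct, hca]; exact hTA)
  -- step B : B⁻¹ - T⁻¹ = m • ((t*b)⁻¹)
  have stepB : (↑b⁻¹ : H →L[ℂ] H) - ↑t⁻¹ = m • ↑(t * b)⁻¹ := by
    have key : (↑b⁻¹ : H →L[ℂ] H) * (T - B) * ↑t⁻¹ = ↑b⁻¹ - ↑t⁻¹ := by
      rw [mul_sub, sub_mul]
      congr 1
      · rw [← hct, mul_assoc, t.mul_inv, mul_one]
      · rw [← hcb, b.inv_mul, one_mul]
    have hTB : T - B = m • (1 : H →L[ℂ] H) := by rw [hT]; abel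
    rw [← key, hTB, mul_smul_comm, smul_mul_assoc, mul_one, mul_inv_rev, Units.val_mul]
  -- S := T * B and bound S ≤ c(c+m) • 1
  have hSnonneg : (0 : H →L[ℂ] H) ≤ ↑(t * b) := by
    rw [Units.val_mul, hct, hcb, hT, add_mul, smul_mul_assoc, one_mul]
    have h1 : (0 : H →L[ℂ] H) ≤ B * B := by
      simpa [hB.star_eq] using star_mul_self_nonneg B
    exact add_nonneg h1 (smul_nonneg hm.le hBpos)
  have hBB : B * B ≤ algebraMap ℝ (H →L[ℂ] H) (c ^ 2) := by
    have := CStarAlgebra.star_mul_le_algebraMap_norm_sq (a := B)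
    rwa [hB.star_eq] at this
  have hBle : B ≤ algebraMap ℝ (H →L[ℂ] H) c := hB.le_algebraMap_norm_self
  have hSle : (↑(t * b) : H →L[ℂ] H) ≤ algebraMap ℝ (H →L[ℂ] H) (c * (c + m)) := by
    rw [Units.val_mul, hct, hcb, hT, add_mul, smul_mul_assoc, one_mul]
    have h2 : m • B ≤ m • algebraMap ℝ (H →L[ℂ] H) c := smul_le_smul_of_nonneg_left hBle hm.le
    calc B * B + m • B ≤ algebraMap ℝ (H →L[ℂ] H) (c ^ 2) + m • algebraMap ℝ (H →L[ℂ] H) c :=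
          add_le_add hBB h2
      _ = algebraMap ℝ (H →L[ℂ] H) (c * (c + m)) := by
          rw [Algebra.algebraMap_eq_smul_one, Algebra.algebraMap_eq_smul_one,
            Algebra.algebraMap_eq_smul_one, smul_smul, ← add_smul]
          ring_nf
  -- scalar unit
  have hr : (0 : ℝ) < c * (c + m) := mul_pos hcpos (by linarith)
  have hrunit : IsUnit (algebraMap ℝ (H →L[ℂ] H) (c * (c + m))) :=
    (isUnit_iff_ne_zero.mpr hr.ne').map (algebraMap ℝ (H →L[ℂ] H))
  set e := hrunit.unit with he
  have hce : (e : H →L[ℂ] H) = algebraMap ℝ (H →L[ℂ] H) (c * (c + m)) := hrunit.unit_spec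
  have hceinv : (↑e⁻¹ : H →L[ℂ] H) = algebraMap ℝ (H →L[ℂ] H) (c * (c + m))⁻¹ := by
    apply e.inv_eq_of_mul_eq_one_right
    rw [hce, ← map_mul, mul_inv_cancel₀ hr.ne', map_one]
  -- step C : (c(c+m))⁻¹ • 1 ≤ S⁻¹
  have stepC : algebraMap ℝ (H →L[ℂ] H) (c * (c + m))⁻¹ ≤ ↑(t * b)⁻¹ := by
    rw [← hceinv]
    exact CStarAlgebra.inv_le_inv hSnonneg (by rw [hce]; exact hSle)
  -- assemble
  have h1 : Ring.inverse A = (↑a⁻¹ : H →L[ℂ] H) := by rw [← hca, Ring.inverse_unit]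
  have h2 : Ring.inverse B = (↑b⁻¹ : H →L[ℂ] H) := by rw [← hcb, Ring.inverse_unit]
  rw [h1, h2]
  have final : m • (algebraMap ℝ (H →L[ℂ] H) (c * (c + m))⁻¹) ≤ ↑b⁻¹ - ↑a⁻¹ := by
    calc m • (algebraMap ℝ (H →L[ℂ] H) (c * (c + m))⁻¹) ≤ m • (↑(t * b)⁻¹ : H →L[ℂ] H) :=
          smul_le_smul_of_nonneg_left stepC hm.le
      _ = (↑b⁻¹ : H →L[ℂ] H) - ↑t⁻¹ := stepB.symm
      _ ≤ ↑b⁻¹ - ↑a⁻¹ := by exact sub_le_sub_left stepA _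
  calc (m * c⁻¹ * (c + m)⁻¹) • (1 : H →L[ℂ] H)
      = m • (algebraMap ℝ (H →L[ℂ] H) (c * (c + m))⁻¹) := by
        rw [Algebra.algebraMap_eq_smul_one, smul_smul, mul_inv]
        ring_nf
    _ ≤ _ := final
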